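/- Let f be convex and β-smooth on a convex compact set S (i.e., ||∇f(s)-∇f(s̄)|| ≤ β||s-s̄|| for all s,s̄ ∈ S). Suppose the iterate s_t ∈ S, direction d_t = F(s_t) - s_t with F(s_t) ∈ S, surrogate gap g_t = -d_t^T ∇f(s_t) satisfies g_t ≥ δ(f(s_t) - f*) and g_t ≥ β ||d_t||^2. Then the full step s_{t+1} = s_t + d_t satisfies f(s_{t+1}) - f* ≤ (1 - δ/2)(f(s_t) - f*), where f* = min_{s∈S} f(s). -/

import Mathlib

open scoped RealInnerProductSpace
noncomputable section

/-- Descent lemma along a segment. -/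
theorem descent_aux {d : ℕ}
    (S : Set (EuclideanSpace ℝ (Fin d))) (hSconv : Convex ℝ S)
    (f : EuclideanSpace ℝ (Fin d) → ℝ)
    (g : EuclideanSpace ℝ (Fin d) → EuclideanSpace ℝ (Fin d))
    (hg : ∀ x ∈ S, HasGradientAt f (g x) x)
    (β : ℝ) (hβ : 0 < β)
    (hsmooth : ∀ x ∈ S, ∀ y ∈ S, ‖g x - g y‖ ≤ β * ‖x - y‖)
    (st Fst : EuclideanSpace ℝ (Fin d)) (hst : st ∈ S) (hFst : Fst ∈ S) :
    f Fst ≤ f st + ⟪g st, Fst - st⟫ + β / 2 * ‖Fst - st‖ ^ 2 := by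
  set dv := Fst - st with hdv
  set φ : ℝ → ℝ := fun t => f (st + t • dv) with hφ
  have hmem : ∀ t ∈ Set.Icc (0:ℝ) 1, st + t • dv ∈ S := by
    intro t ht
    have := hSconv hst hFst (by linarith [ht.1, ht.2] : (0:ℝ) ≤ 1 - t) ht.1 (by ring)
    convert this using 1
    simp only [hdv]
    module
  have hφd : ∀ t ∈ Set.Icc (0:ℝ) 1,
      HasDerivAt φ (⟪g (st + t • dv), dv⟫) t := by
    intro t ht
    have h1 : HasFDerivAt f (InnerProductSpace.toDual ℝ _ (g (st + t • dv))) (st + t • dv) :=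
      (hg _ (hmem t ht)).hasFDerivAt
    have h2 : HasDerivAt (fun s : ℝ => st + s • dv) dv t := by
      simpa using ((hasDerivAt_id t).smul_const dv).const_add st
    have := h1.comp_hasDerivAt t h2
    exact this
  set ψ : ℝ → ℝ := fun t => f st + t * ⟪g st, dv⟫ + β * ‖dv‖ ^ 2 * t ^ 2 / 2 with hψ
  set h : ℝ → ℝ := fun t => ψ t - φ t with hh
  have hhd : ∀ t ∈ Set.Icc (0:ℝ) 1,
      HasDerivAt h (⟪g st, dv⟫ + β * ‖dv‖ ^ 2 * t - ⟪g (st + t • dv), dv⟫) t := by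
    intro t ht
    have hψd : HasDerivAt ψ (⟪g st, dv⟫ + β * ‖dv‖ ^ 2 * t) t := by
      have : HasDerivAt (fun t : ℝ => f st + t * ⟪g st, dv⟫ + β * ‖dv‖ ^ 2 * t ^ 2 / 2)
          (⟪g st, dv⟫ + β * ‖dv‖ ^ 2 * t) t := by
        have h1 : HasDerivAt (fun t : ℝ => t * ⟪g st, dv⟫) ⟪g st, dv⟫ t := by
          simpa using (hasDerivAt_id t).mul_const ⟪g st, dv⟫
        have h2 : HasDerivAt (fun t : ℝ => β * ‖dv‖ ^ 2 * t ^ 2 / 2) (β * ‖dv‖ ^ 2 * t) t := by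
          have := ((hasDerivAt_pow 2 t).const_mul (β * ‖dv‖ ^ 2)).div_const 2
          refine this.congr_deriv ?_
          ring
        exact (h1.const_add (f st)).add h2
      exact this
    exact hψd.sub (hφd t ht)
  have hd_nonneg : ∀ t ∈ Set.Icc (0:ℝ) 1,
      0 ≤ ⟪g st, dv⟫ + β * ‖dv‖ ^ 2 * t - ⟪g (st + t • dv), dv⟫ := by
    intro t ht
    have key : ⟪g (st + t • dv), dv⟫ - ⟪g st, dv⟫ ≤ β * ‖dv‖ ^ 2 * t := by
      have h1 : ⟪g (st + t • dv), dv⟫ - ⟪g st, dv⟫ = ⟪g (st + t • dv) - g st, dv⟫ := by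
        rw [inner_sub_left]
      rw [h1]
      calc ⟪g (st + t • dv) - g st, dv⟫ ≤ ‖g (st + t • dv) - g st‖ * ‖dv‖ :=
            real_inner_le_norm _ _
        _ ≤ (β * ‖st + t • dv - st‖) * ‖dv‖ := by
            apply mul_le_mul_of_nonneg_right _ (norm_nonneg _)
            exact hsmooth _ (hmem t ht) _ hst
        _ = β * ‖dv‖ ^ 2 * t := by
            have : ‖st + t • dv - st‖ = t * ‖dv‖ := by
              rw [add_sub_cancel_left, norm_smul, Real.norm_eq_abs, abs_of_nonneg ht.1]
            rw [this]; ring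
    linarith
  have hmono : MonotoneOn h (Set.Icc 0 1) := by
    apply monotoneOn_of_deriv_nonneg (convex_Icc 0 1)
    · intro t ht
      exact ((hhd t ht).continuousAt.continuousWithinAt)
    · intro t ht
      rw [interior_Icc] at ht
      exact ((hhd t ⟨le_of_lt ht.1, le_of_lt ht.2⟩).differentiableAt.differentiableWithinAt)
    · intro t ht
      rw [interior_Icc] at ht
      rw [(hhd t ⟨le_of_lt ht.1, le_of_lt ht.2⟩).deriv]
      exact hd_nonneg t ⟨le_of_lt ht.1, le_of_lt ht.2⟩
  have := hmono (Set.left_mem_Icc.2 zero_le_one) (Set.right_mem_Icc.2 zero_le_one) zero_le_one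
  simp only [hh, hψ, hφ] at this
  simp only [zero_smul, add_zero, one_smul] at this
  have heq : st + dv = Fst := by simp [hdv]
  rw [heq] at this
  nlinarith [this]

/-- Geometric decay of the suboptimality after a full Frank-Wolfe
step when the surrogate gap dominates the curvature term. -/
theorem frank_wolfe_full_step_decrease {d : ℕ}
    (S : Set (EuclideanSpace ℝ (Fin d))) (hSconv : Convex ℝ S) (hScomp : IsCompact S)
    (f : EuclideanSpace ℝ (Fin d) → ℝ) (hf : ConvexOn ℝ S f)
    (g : EuclideanSpace ℝ (Fin d) → EuclideanSpace ℝ (Fin d))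
    (hg : ∀ x ∈ S, HasGradientAt f (g x) x)
    (β : ℝ) (hβ : 0 < β)
    (hsmooth : ∀ x ∈ S, ∀ y ∈ S, ‖g x - g y‖ ≤ β * ‖x - y‖)
    (fstar : ℝ) (hfstar : IsLeast (f '' S) fstar)
    (δ : ℝ) (hδ0 : 0 < δ) (hδ1 : δ ≤ 1)
    (st Fst : EuclideanSpace ℝ (Fin d)) (hst : st ∈ S) (hFst : Fst ∈ S)
    (hgap : ⟪st - Fst, g st⟫ ≥ δ * (f st - fstar))
    (hbig : ⟪st - Fst, g st⟫ ≥ β * ‖Fst - st‖ ^ 2) :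
    f (st + (Fst - st)) - fstar ≤ (1 - δ / 2) * (f st - fstar) := by
  have hdesc := descent_aux S hSconv f g hg β hβ hsmooth st Fst hst hFst
  have hinner : ⟪g st, Fst - st⟫ = -⟪st - Fst, g st⟫ := by
    rw [real_inner_comm]
    rw [show st - Fst = -(Fst - st) by abel, inner_neg_left]; ring
  have heq : st + (Fst - st) = Fst := by abel
  rw [heq]
  have hsub : 0 ≤ f st - fstar := by
    have := hfstar.2 ⟨st, hst, rfl⟩
    linarith
  nlinarith [sq_nonneg ‖Fst - st‖]
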